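/- Let P = ν·I with ν > 0, F ∈ ℝ^{n×n}, and suppose [[P·F + Fᵀ·P + (α² + ε)·I, P·F], [Fᵀ·P, -I]] ⪯ 0. Let H be symmetric with c₁·I ⪯ H ⪯ c₂·I where 0 < c₁ ≤ c₂, β = (c₁+c₂)/2, μ = (c₂-c₁)/2, α = μ/β, δ = ε·β². Then for A = H·Fᵀ, the matrix νβ·(Aᵀ + A') satisfies: νβ·(H·Fᵀ + F·H) + δ·I ⪯ 0, i.e., νβ·(H·Fᵀ + F·H) ⪯ -δ·I. -/

import Mathlib

open Matrix

lemma dp_self_nonneg {n : ℕ} (x : Fin n → ℝ) : 0 ≤ x ⬝ᵥ x := by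
  simpa [dotProduct] using Finset.sum_nonneg (fun i (_ : i ∈ Finset.univ) => mul_self_nonneg (x i))

lemma aux_norm_bound {n : ℕ} (μ : ℝ) (hμ0 : 0 ≤ μ) (X : Matrix (Fin n) (Fin n) ℝ)
    (hX : Xᵀ = X)
    (hub : ∀ u : Fin n → ℝ, u ⬝ᵥ (X *ᵥ u) ≤ μ * (u ⬝ᵥ u))
    (hlb : ∀ u : Fin n → ℝ, -(μ * (u ⬝ᵥ u)) ≤ u ⬝ᵥ (X *ᵥ u)) (x : Fin n → ℝ) :
    (X *ᵥ x) ⬝ᵥ (X *ᵥ x) ≤ μ ^ 2 * (x ⬝ᵥ x) := by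
  set y := X *ᵥ x with hy
  have ha0 : 0 ≤ x ⬝ᵥ x := dp_self_nonneg x
  have hb0 : 0 ≤ y ⬝ᵥ y := dp_self_nonneg y
  have key : x ⬝ᵥ (X *ᵥ y) = y ⬝ᵥ y := by
    rw [dotProduct_mulVec, ← mulVec_transpose, hX, ← hy]
  have key2 : y ⬝ᵥ (X *ᵥ x) = y ⬝ᵥ y := rfl
  set p := Real.sqrt (x ⬝ᵥ x) with hp
  set q := Real.sqrt (y ⬝ᵥ y) with hq
  have hp2 : p ^ 2 = x ⬝ᵥ x := Real.sq_sqrt ha0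
  have hq2 : q ^ 2 = y ⬝ᵥ y := Real.sq_sqrt hb0
  have hp0 : 0 ≤ p := Real.sqrt_nonneg _
  have hq0 : 0 ≤ q := Real.sqrt_nonneg _
  have h1 := hub (q • x + p • y)
  have h2 := hlb (q • x - p • y)
  simp only [mulVec_add, mulVec_sub, mulVec_smul, dotProduct_add, add_dotProduct,
    dotProduct_sub, sub_dotProduct, dotProduct_smul, smul_dotProduct, smul_eq_mul,
    key, key2, ← hy] at h1 h2
  rw [dotProduct_comm y x] at h1 h2
  have hkey : 4 * (p * q * (y ⬝ᵥ y)) ≤ 2 * (μ * (q ^ 2 * (x ⬝ᵥ x))) + 2 * (μ * (p ^ 2 * (y ⬝ᵥ y))) := by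
    nlinarith [h1, h2]
  rw [← hp2, ← hq2] at hkey
  rcases eq_or_lt_of_le ha0 with h | hapos
  · have hx0 : x = 0 := dotProduct_self_eq_zero.mp h.symm
    have hb : y ⬝ᵥ y = 0 := by simp [hy, hx0]
    rw [hb]
    positivity
  rcases eq_or_lt_of_le hb0 with h | hbpos
  · rw [← h]; positivity
  have hppos : 0 < p := by rw [hp]; exact Real.sqrt_pos.mpr hapos
  have hqpos : 0 < q := by rw [hq]; exact Real.sqrt_pos.mpr hbpos
  have hqle : q ≤ μ * p := by
    nlinarith [hkey, mul_pos hppos (mul_pos hqpos hqpos)]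
  rw [← hp2, ← hq2]
  nlinarith [hqle, hq0, mul_nonneg hμ0 hp0]

theorem stmt_14 {n : ℕ} (ν : ℝ) (hν : 0 < ν) (F : Matrix (Fin n) (Fin n) ℝ)
    (H : Matrix (Fin n) (Fin n) ℝ) (hH : H.IsHermitian)
    (c₁ c₂ ε : ℝ) (hc₁ : 0 < c₁) (hc₁₂ : c₁ ≤ c₂) (hε : 0 < ε)
    (β μ α δ : ℝ) (hβ : β = (c₁ + c₂) / 2) (hμ : μ = (c₂ - c₁) / 2)
    (hα : α = μ / β) (hδ : δ = ε * β ^ 2)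
    (hHlb : (H - c₁ • (1 : Matrix (Fin n) (Fin n) ℝ)).PosSemidef)
    (hHub : (c₂ • (1 : Matrix (Fin n) (Fin n) ℝ) - H).PosSemidef)
    (hLMI : (-(Matrix.fromBlocks
        ((ν • (1 : Matrix (Fin n) (Fin n) ℝ)) * F
          + Fᵀ * (ν • (1 : Matrix (Fin n) (Fin n) ℝ))
          + (α ^ 2 + ε) • (1 : Matrix (Fin n) (Fin n) ℝ))
        ((ν • (1 : Matrix (Fin n) (Fin n) ℝ)) * F)
        (Fᵀ * (ν • (1 : Matrix (Fin n) (Fin n) ℝ)))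
        (-1))).PosSemidef) :
    (-((ν * β) • (H * Fᵀ + F * H) + δ • (1 : Matrix (Fin n) (Fin n) ℝ))).PosSemidef := by
  have hβpos : 0 < β := by rw [hβ]; linarith
  have hμ0 : 0 ≤ μ := by rw [hμ]; linarith
  have hHt : Hᵀ = H := by
    rw [← conjTranspose_eq_transpose_of_trivial]; exact hH
  set X : Matrix (Fin n) (Fin n) ℝ := H - β • 1 with hXdef
  have hXt : Xᵀ = X := by
    rw [hXdef, transpose_sub, transpose_smul, transpose_one, hHt]
  have hub : ∀ u : Fin n → ℝ, u ⬝ᵥ (X *ᵥ u) ≤ μ * (u ⬝ᵥ u) := by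
    intro u
    have h := hHub.dotProduct_mulVec_nonneg u
    simp only [star_trivial, sub_mulVec, smul_mulVec, one_mulVec, dotProduct_sub,
      dotProduct_smul, smul_eq_mul] at h
    simp only [hXdef, sub_mulVec, smul_mulVec, one_mulVec, dotProduct_sub,
      dotProduct_smul, smul_eq_mul]
    have : μ = c₂ - β := by rw [hμ, hβ]; ring
    rw [this]; linarith
  have hlb : ∀ u : Fin n → ℝ, -(μ * (u ⬝ᵥ u)) ≤ u ⬝ᵥ (X *ᵥ u) := by
    intro u
    have h := hHlb.dotProduct_mulVec_nonneg u
    simp only [star_trivial, sub_mulVec, smul_mulVec, one_mulVec, dotProduct_sub,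
      dotProduct_smul, smul_eq_mul] at h
    simp only [hXdef, sub_mulVec, smul_mulVec, one_mulVec, dotProduct_sub,
      dotProduct_smul, smul_eq_mul]
    have : μ = β - c₁ := by rw [hμ, hβ]; ring
    rw [this]; linarith
  rw [posSemidef_iff_dotProduct_mulVec]
  constructor
  · -- Hermitian
    have h1 : (H * Fᵀ + F * H)ᴴ = H * Fᵀ + F * H := by
      rw [conjTranspose_eq_transpose_of_trivial, transpose_add, transpose_mul, transpose_mul,
        transpose_transpose, hHt]
      exact add_comm _ _
    rw [IsHermitian, conjTranspose_neg, conjTranspose_add, conjTranspose_smul,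
      conjTranspose_smul, conjTranspose_one, h1, star_trivial, star_trivial]
  · intro x
    set y := X *ᵥ x with hy
    have hbnd := aux_norm_bound μ hμ0 X hXt hub hlb x
    have hHx : H *ᵥ x = y + β • x := by
      rw [hy, hXdef, sub_mulVec, smul_mulVec, one_mulVec, sub_add_cancel]
    have eq1 : x ⬝ᵥ (Fᵀ *ᵥ x) = x ⬝ᵥ (F *ᵥ x) := by
      rw [dotProduct_mulVec, vecMul_transpose, dotProduct_comm]
    have eq2 : y ⬝ᵥ (Fᵀ *ᵥ x) = x ⬝ᵥ (F *ᵥ y) := by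
      rw [dotProduct_mulVec, vecMul_transpose, dotProduct_comm]
    have e3 : x ⬝ᵥ ((H * Fᵀ) *ᵥ x) = x ⬝ᵥ (F *ᵥ y) + β * (x ⬝ᵥ (F *ᵥ x)) := by
      rw [← mulVec_mulVec, dotProduct_mulVec (v := x) (A := H), ← mulVec_transpose, hHt, hHx,
        add_dotProduct, smul_dotProduct, smul_eq_mul, eq2, eq1]
    have e4 : x ⬝ᵥ ((F * H) *ᵥ x) = x ⬝ᵥ (F *ᵥ y) + β * (x ⬝ᵥ (F *ᵥ x)) := by
      rw [← mulVec_mulVec, hHx, mulVec_add, mulVec_smul, dotProduct_add, dotProduct_smul,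
        smul_eq_mul]
    -- LMI instantiation
    have hq := hLMI.dotProduct_mulVec_nonneg (Sum.elim (β • x) y)
    simp only [star_trivial, neg_mulVec, dotProduct_neg, fromBlocks_mulVec,
      sumElim_dotProduct_sumElim, add_mulVec, Matrix.smul_mul, one_mul,
      Matrix.mul_smul, mul_one, smul_mulVec, one_mulVec, mulVec_smul,
      dotProduct_add, add_dotProduct, dotProduct_smul, smul_dotProduct, smul_eq_mul,
      neg_mulVec, dotProduct_neg, ← mulVec_mulVec, Sum.elim_comp_inl, Sum.elim_comp_inr,
      eq1, eq2] at hq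
    rw [← hy] at hbnd
    simp only [star_trivial, neg_mulVec, dotProduct_neg, add_mulVec, smul_mulVec,
      one_mulVec, dotProduct_add, dotProduct_smul, smul_eq_mul]
    rw [e3, e4, hδ]
    have hμa : α ^ 2 * β ^ 2 = μ ^ 2 := by
      rw [hα]; field_simp
    have hμax := congrArg (· * (x ⬝ᵥ x)) hμa
    linarith [hq, hbnd, hμax, dp_self_nonneg x]
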